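/- Let A = ℂ[a, b, x, y, z] and let ξ be the ℂ-derivation of A defined by ξ(a) = 0, ξ(b) = 0, ξ(x) = a², ξ(y) = ax + b, ξ(z) = y. Set I₁ = a, I₂ = b, I₃ = ax² + 2bx − 2a²y, I₄ = 2ax³ + 3bx² − 6a²xy + 6a⁴z, and I₅ = 3ax⁴ + 4bx³ − 12a²x²y + 12a³y² − 24a³bz. Then: (a) ξ(I₅) = 0; (b) the syzygy I₁·I₅ + 4·I₂·I₄ − 3·I₃² = 0 holds in A; and (c) I₅ does NOT belong to the ℂ-subalgebra of A generated by I₁, I₂, I₃, I₄. Hence the algebra of polynomial absolute invariants of ξ is not generated by I₁, I₂, I₃, I₄. -/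
import Mathlib


open MvPolynomial

/-- The polynomial ring `A = ℂ[a, b, x, y, z]`, with variable indices
`0 ↦ a`, `1 ↦ b`, `2 ↦ x`, `3 ↦ y`, `4 ↦ z`. -/
abbrev A5 : Type := MvPolynomial (Fin 5) ℂ

/-- `I₁ = a`. -/
noncomputable def I1 : A5 := X 0
/-- `I₂ = b`. -/
noncomputable def I2 : A5 := X 1
/-- `I₃ = ax² + 2bx − 2a²y`. -/
noncomputable def I3 : A5 := X 0 * X 2 ^ 2 + 2 * X 1 * X 2 - 2 * X 0 ^ 2 * X 3
/-- `I₄ = 2ax³ + 3bx² − 6a²xy + 6a⁴z`. -/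
noncomputable def I4 : A5 :=
  2 * X 0 * X 2 ^ 3 + 3 * X 1 * X 2 ^ 2 - 6 * X 0 ^ 2 * X 2 * X 3 + 6 * X 0 ^ 4 * X 4
/-- `I₅ = 3ax⁴ + 4bx³ − 12a²x²y + 12a³y² − 24a³bz`. -/
noncomputable def I5 : A5 :=
  3 * X 0 * X 2 ^ 4 + 4 * X 1 * X 2 ^ 3 - 12 * X 0 ^ 2 * X 2 ^ 2 * X 3
    + 12 * X 0 ^ 3 * X 3 ^ 2 - 24 * X 0 ^ 3 * X 1 * X 4

/-! ### Auxiliary material for part (c):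
we substitute `a ↦ 0, b ↦ X 0, x ↦ X 1, y ↦ 0, z ↦ 0` into `ℂ[b, x]`,
and use that in the images of `I₁, …, I₄` every monomial `b^m x^n`
satisfies `n ≤ 2m`, while the image `4 b x³` of `I₅` does not. -/

/-- The polynomial ring `ℂ[b, x]` (indices `0 ↦ b`, `1 ↦ x`). -/
abbrev B2 : Type := MvPolynomial (Fin 2) ℂ

/-- Every monomial of `p` has `x`-degree at most twice its `b`-degree. -/
def okP (p : B2) : Prop := ∀ d ∈ p.support, d 1 ≤ 2 * d 0

lemma okP_zero : okP 0 := by intro d hd; simp [support_zero] at hd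

lemma okP_mono (j k : ℕ) (h : k ≤ 2 * j) : okP ((X 0 : B2) ^ j * X 1 ^ k) := by
  intro d hd
  rw [X_pow_eq_monomial, X_pow_eq_monomial, monomial_mul, one_mul] at hd
  have hs := support_monomial_subset hd
  simp only [Finset.mem_singleton] at hs
  subst hs
  simpa [Finsupp.single_apply] using h

lemma okP_smul (c : ℂ) (p : B2) (hp : okP p) : okP (c • p) :=
  fun d hd => hp d (Finsupp.support_smul hd)

lemma okP_C (c : ℂ) : okP (C c : B2) := by
  intro d hd
  rw [C_apply] at hd
  have hs := support_monomial_subset hd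
  simp only [Finset.mem_singleton] at hs
  subst hs; simp

lemma okP_add (p q : B2) (hp : okP p) (hq : okP q) : okP (p + q) := by
  intro d hd
  rcases Finset.mem_union.mp (support_add hd) with h | h
  exacts [hp d h, hq d h]

lemma okP_mul (p q : B2) (hp : okP p) (hq : okP q) : okP (p * q) := by
  intro d hd
  obtain ⟨d1, h1, d2, h2, rfl⟩ := Finset.mem_add.mp (support_mul p q hd)
  simp only [Finsupp.add_apply]
  have := hp d1 h1; have := hq d2 h2; omega

lemma okP_adjoin {s : Set B2} (hs : ∀ p ∈ s, okP p) {x : B2}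
    (hx : x ∈ Algebra.adjoin ℂ s) : okP x := by
  induction hx using Algebra.adjoin_induction with
  | mem p hp => exact hs p hp
  | algebraMap c => exact okP_C c
  | add p q _ _ hp hq => exact okP_add p q hp hq
  | mul p q _ _ hp hq => exact okP_mul p q hp hq

lemma not_okP : ¬ okP (4 * X 0 * X 1 ^ 3 : B2) := by
  intro h
  have e : (4 * X 0 * X 1 ^ 3 : B2)
      = monomial (Finsupp.single 0 1 + Finsupp.single 1 3) 4 := by
    rw [X, X_pow_eq_monomial, show (4:B2) = C 4 from (map_ofNat C 4).symm,
      C_mul_monomial, monomial_mul]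
    norm_num
  have hd : (Finsupp.single 0 1 + Finsupp.single 1 3 : Fin 2 →₀ ℕ)
      ∈ (4 * X 0 * X 1 ^ 3 : B2).support := by
    rw [e, support_monomial, if_neg (by norm_num)]
    simp
  have := h _ hd
  simp [Finsupp.single_apply] at this

/-- The substitution homomorphism `a ↦ 0, b ↦ X 0, x ↦ X 1, y ↦ 0, z ↦ 0`. -/
noncomputable def phi : A5 →ₐ[ℂ] B2 := aeval ![0, X 0, X 1, 0, 0]

lemma phi_I1 : phi I1 = 0 := by simp [phi, I1]
lemma phi_I2 : phi I2 = X 0 := by simp [phi, I2]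
lemma phi_I3 : phi I3 = (2:ℂ) • ((X 0 : B2) ^ 1 * X 1 ^ 1) := by
  rw [smul_eq_C_mul, map_ofNat]
  simp [phi, I3, map_ofNat]
  ring
lemma phi_I4 : phi I4 = (3:ℂ) • ((X 0 : B2) ^ 1 * X 1 ^ 2) := by
  rw [smul_eq_C_mul, map_ofNat]
  simp [phi, I4, map_ofNat]
  ring
lemma phi_I5 : phi I5 = 4 * X 0 * X 1 ^ 3 := by
  simp [phi, I5, map_ofNat]

/-- Let `ξ` be the ℂ-derivation of `A = ℂ[a, b, x, y, z]` with
`ξ(a) = 0`, `ξ(b) = 0`, `ξ(x) = a²`, `ξ(y) = ax + b`, `ξ(z) = y`.  Then (a) `ξ(I₅) = 0`;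
(b) `I₁·I₅ + 4·I₂·I₄ − 3·I₃² = 0`; (c) `I₅` does not belong to the ℂ-subalgebra generated
by `I₁, I₂, I₃, I₄`.  Hence the algebra of polynomial absolute invariants of `ξ` is not
generated by `I₁, I₂, I₃, I₄`. -/
theorem I5_is_invariant_but_not_generated
    (ξ : Derivation ℂ A5 A5)
    (ha : ξ (X 0) = 0) (hb : ξ (X 1) = 0) (hx : ξ (X 2) = X 0 ^ 2)
    (hy : ξ (X 3) = X 0 * X 2 + X 1) (hz : ξ (X 4) = X 3) :
    ξ I5 = 0 ∧
    I1 * I5 + 4 * I2 * I4 - 3 * I3 ^ 2 = 0 ∧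
    I5 ∉ Algebra.adjoin ℂ ({I1, I2, I3, I4} : Set A5) := by
  refine ⟨?_, ?_, ?_⟩
  · -- (a) `ξ I₅ = 0`
    have hn : ∀ n : ℕ, ξ ((n : ℕ) : A5) = 0 := fun n => by simp
    have c3 : ξ (3 : A5) = 0 := by rw [show (3:A5) = ((3:ℕ):A5) by norm_cast]; exact hn 3
    have c4 : ξ (4 : A5) = 0 := by rw [show (4:A5) = ((4:ℕ):A5) by norm_cast]; exact hn 4
    have c12 : ξ (12 : A5) = 0 := by rw [show (12:A5) = ((12:ℕ):A5) by norm_cast]; exact hn 12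
    have c24 : ξ (24 : A5) = 0 := by rw [show (24:A5) = ((24:ℕ):A5) by norm_cast]; exact hn 24
    simp only [I5, map_add, map_sub, Derivation.leibniz, Derivation.leibniz_pow,
      ha, hb, hx, hy, hz, c3, c4, c12, c24, smul_zero, zero_smul, smul_eq_mul, mul_zero,
      zero_mul, add_zero, zero_add, nsmul_eq_mul]
    push_cast
    ring
  · -- (b) the syzygy
    simp only [I1, I2, I3, I4, I5]
    ring
  · -- (c) `I₅` is not in the subalgebra generated by `I₁, I₂, I₃, I₄`
    intro h
    have hm : phi I5 ∈ Algebra.adjoin ℂ (phi '' ({I1, I2, I3, I4} : Set A5)) := by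
      rw [← AlgHom.map_adjoin]
      exact Subalgebra.mem_map.mpr ⟨I5, h, rfl⟩
    have hok : okP (phi I5) := by
      refine okP_adjoin ?_ hm
      rintro p ⟨q, hq, rfl⟩
      rcases hq with rfl | rfl | rfl | rfl
      · rw [phi_I1]; exact okP_zero
      · rw [phi_I2]
        have := okP_mono 1 0 (by norm_num)
        simpa using this
      · rw [phi_I3]; exact okP_smul _ _ (okP_mono 1 1 (by norm_num))
      · rw [phi_I4]; exact okP_smul _ _ (okP_mono 1 2 (by norm_num))
    rw [phi_I5] at hok
    exact not_okP hok
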